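/- Let λ ≥ 0. Let X be a random variable uniform on {−1, +1}, let N be a standard Gaussian random variable independent of X, and set Y = √λ·X + N. Then E[(X − E[X | Y])²] ≤ 4·Q(√λ), where Q(t) = ∫_t^∞ (1/√(2π))·e^{−z²/2} dz is the standard Gaussian tail function. -/

import Mathlib

open MeasureTheory ProbabilityTheory

lemma integrable_of_ae_bound' {Ω : Type*} [MeasurableSpace Ω] {μ : Measure Ω}
    [IsFiniteMeasure μ] {f : Ω → ℝ} (hf : AEStronglyMeasurable f μ) {c : ℝ}
    (hbd : ∀ᵐ ω ∂μ, |f ω| ≤ c) : Integrable f μ :=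
  ⟨hf, HasFiniteIntegral.of_bounded (C := c) (by filter_upwards [hbd] with ω h; simpa using h)⟩

lemma mmse_le_aux {Ω : Type*} {m m0 : MeasurableSpace Ω} (hm : m ≤ m0) (μ : Measure Ω)
    [IsProbabilityMeasure μ] (X Z : Ω → ℝ)
    (hX : Measurable X) (hXbd : ∀ᵐ ω ∂μ, |X ω| ≤ 1)
    (hZ : StronglyMeasurable[m] Z) (hZbd : ∀ ω, |Z ω| ≤ 1) :
    ∫ ω, (X ω - (μ[X|m]) ω) ^ 2 ∂μ ≤ ∫ ω, (X ω - Z ω) ^ 2 ∂μ := by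
  have hXint : Integrable X μ := integrable_of_ae_bound' hX.aestronglyMeasurable hXbd
  set C := μ[X|m] with hC
  have hCsm : StronglyMeasurable[m] C := stronglyMeasurable_condExp
  have hCsm0 : AEStronglyMeasurable C μ := (hCsm.mono hm).aestronglyMeasurable
  have hCint : Integrable C μ := integrable_condExp
  -- |C| ≤ 1 a.e.
  have hCbd : ∀ᵐ ω ∂μ, |C ω| ≤ 1 := by
    have h1 : C ≤ᵐ[μ] fun _ => (1 : ℝ) := by
      have := condExp_mono (m := m) hXint (integrable_const (1:ℝ))
        (by filter_upwards [hXbd] with ω h using (abs_le.mp h).2)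
      rwa [condExp_const hm] at this
    have h2 : (fun _ => (-1 : ℝ)) ≤ᵐ[μ] C := by
      have := condExp_mono (m := m) (integrable_const (-1:ℝ)) hXint
        (by filter_upwards [hXbd] with ω h using (abs_le.mp h).1)
      rwa [condExp_const hm] at this
    filter_upwards [h1, h2] with ω ha hb
    exact abs_le.mpr ⟨hb, ha⟩
  have hZsm0 : AEStronglyMeasurable Z μ := (hZ.mono hm).aestronglyMeasurable
  set W : Ω → ℝ := fun ω => C ω - Z ω with hW
  have hWsm : StronglyMeasurable[m] W := hCsm.sub hZ
  have hWbd : ∀ᵐ ω ∂μ, |W ω| ≤ 2 := by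
    filter_upwards [hCbd] with ω h
    calc |C ω - Z ω| ≤ |C ω| + |Z ω| := abs_sub _ _
    _ ≤ 1 + 1 := add_le_add h (hZbd ω)
    _ = 2 := by norm_num
  -- cross term is zero
  have hWXint : Integrable (W * X) μ := integrable_of_ae_bound' ((hWsm.mono hm).aestronglyMeasurable.mul hX.aestronglyMeasurable)
      (c := 2) (by filter_upwards [hWbd, hXbd] with ω h1 h2
                   calc |(W * X) ω| = |W ω| * |X ω| := abs_mul _ _
                   _ ≤ 2 * 1 := mul_le_mul h1 h2 (abs_nonneg _) (by norm_num)
                   _ = 2 := by norm_num)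
  have hWCint : Integrable (W * C) μ := integrable_of_ae_bound' ((hWsm.mono hm).aestronglyMeasurable.mul hCsm0)
      (c := 2) (by filter_upwards [hWbd, hCbd] with ω h1 h2
                   calc |(W * C) ω| = |W ω| * |C ω| := abs_mul _ _
                   _ ≤ 2 * 1 := mul_le_mul h1 h2 (abs_nonneg _) (by norm_num)
                   _ = 2 := by norm_num)
  have hpull : μ[W * X|m] =ᵐ[μ] W * C := condExp_mul_of_stronglyMeasurable_left hWsm hWXint hXint
  have hcross : ∫ ω, W ω * (X ω - C ω) ∂μ = 0 := by
    have h1 : ∫ ω, (W * X) ω ∂μ = ∫ ω, (W * C) ω ∂μ :=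
      (integral_condExp hm).symm.trans (integral_congr_ae hpull)
    have : ∫ ω, W ω * (X ω - C ω) ∂μ = ∫ ω, (W * X) ω ∂μ - ∫ ω, (W * C) ω ∂μ := by
      rw [← integral_sub hWXint hWCint]
      congr 1; ext ω; simp [mul_sub]
    rw [this, h1, sub_self]
  -- expand
  have hXCint2 : Integrable (fun ω => (X ω - C ω) ^ 2) μ :=
    integrable_of_ae_bound' (((hX.aestronglyMeasurable.sub hCsm0).pow 2))
      (c := 4) (by filter_upwards [hXbd, hCbd] with ω h1 h2
                   have : |X ω - C ω| ≤ 2 := by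
                     calc |X ω - C ω| ≤ |X ω| + |C ω| := abs_sub _ _
                     _ ≤ 2 := by linarith
                   calc |(X ω - C ω)^2| = |X ω - C ω|^2 := abs_pow _ _
                   _ ≤ 2^2 := pow_le_pow_left₀ (abs_nonneg _) this 2
                   _ = 4 := by norm_num)
  have hW2int : Integrable (fun ω => W ω ^ 2) μ :=
    integrable_of_ae_bound' (((hWsm.mono hm).aestronglyMeasurable).pow 2)
      (c := 4) (by filter_upwards [hWbd] with ω h1
                   calc |W ω ^ 2| = |W ω|^2 := abs_pow _ _
                   _ ≤ 2^2 := pow_le_pow_left₀ (abs_nonneg _) h1 2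
                   _ = 4 := by norm_num)
  have hcrossint : Integrable (fun ω => W ω * (X ω - C ω)) μ := by
    have : (fun ω => W ω * (X ω - C ω)) = fun ω => (W * X) ω - (W * C) ω := by
      ext ω; simp [mul_sub]
    rw [this]; exact hWXint.sub hWCint
  have hexp : ∫ ω, (X ω - Z ω) ^ 2 ∂μ
      = ∫ ω, (X ω - C ω) ^ 2 ∂μ + (2 * ∫ ω, W ω * (X ω - C ω) ∂μ + ∫ ω, W ω ^ 2 ∂μ) := by
    have : (fun ω => (X ω - Z ω) ^ 2)
        = fun ω => (X ω - C ω) ^ 2 + (2 * (W ω * (X ω - C ω)) + W ω ^ 2) := by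
      ext ω; simp only [hW]; ring
    have h2c : Integrable (fun ω => 2 * (W ω * (X ω - C ω))) μ := hcrossint.const_mul 2
    have hsum : Integrable (fun ω => 2 * (W ω * (X ω - C ω)) + W ω ^ 2) μ := h2c.add hW2int
    rw [this, integral_add hXCint2 hsum, integral_add h2c hW2int, integral_const_mul]
  rw [hexp, hcross]
  have : 0 ≤ ∫ ω, W ω ^ 2 ∂μ := integral_nonneg fun ω => sq_nonneg _
  linarith


open MeasureTheory ProbabilityTheory

/-- The standard Gaussian tail function `Q(t) = ∫_t^∞ (1/√(2π)) e^{−z²/2} dz`. -/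
noncomputable def gaussQ (t : ℝ) : ℝ :=
  ∫ z in Set.Ioi t, (1 / Real.sqrt (2 * Real.pi)) * Real.exp (-z ^ 2 / 2)

lemma gaussianPDFReal_eq (x : ℝ) :
    gaussianPDFReal 0 1 x = (1 / Real.sqrt (2 * Real.pi)) * Real.exp (-x ^ 2 / 2) := by
  simp [gaussianPDFReal, sub_zero]

lemma gauss_Ioi (t : ℝ) : (gaussianReal 0 1 (Set.Ioi t)).toReal = gaussQ t := by
  rw [gaussianReal_apply_eq_integral 0 one_ne_zero, ENNReal.toReal_ofReal]
  · rw [gaussQ]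
    exact setIntegral_congr_fun measurableSet_Ioi fun x _ => gaussianPDFReal_eq x
  · exact setIntegral_nonneg measurableSet_Ioi fun x _ => gaussianPDFReal_nonneg _ _ _

lemma gauss_Iic (t : ℝ) : (gaussianReal 0 1 (Set.Iic (-t))).toReal = gaussQ t := by
  rw [gaussianReal_apply_eq_integral 0 one_ne_zero, ENNReal.toReal_ofReal]
  · rw [gaussQ, ← integral_comp_neg_Ioi]
    refine setIntegral_congr_fun measurableSet_Ioi fun x _ => ?_
    rw [gaussianPDFReal_eq]; ring_nf
  · exact setIntegral_nonneg measurableSet_Iic fun x _ => gaussianPDFReal_nonneg _ _ _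

open MeasureTheory ProbabilityTheory

set_option maxHeartbeats 1000000 in
/-- Let `λ ≥ 0`, `X` uniform on `{−1, +1}`, `N` a standard
Gaussian independent of `X`, and `Y = √λ·X + N`.  Then the minimum mean-square
error satisfies `E[(X − E[X|Y])²] ≤ 4·Q(√λ)`. -/
theorem stmt_3 {Ω : Type*} [MeasurableSpace Ω] (μ : Measure Ω)
    [IsProbabilityMeasure μ] (lam : ℝ) (hlam : 0 ≤ lam)
    (X N Y : Ω → ℝ) (hX : Measurable X) (hN : Measurable N)
    (hindep : IndepFun X N μ)
    (hXlaw : μ.map X =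
      (1 / 2 : ENNReal) • Measure.dirac (-1 : ℝ) +
        (1 / 2 : ENNReal) • Measure.dirac (1 : ℝ))
    (hNlaw : μ.map N = gaussianReal 0 1)
    (hY : ∀ ω, Y ω = Real.sqrt lam * X ω + N ω) :
    ∫ ω, (X ω - (μ[X | MeasurableSpace.comap Y inferInstance]) ω) ^ 2 ∂μ ≤
      4 * gaussQ (Real.sqrt lam) := by
  set t : ℝ := Real.sqrt lam with ht
  have hYmeas : Measurable Y := by
    have : Y = fun ω => t * X ω + N ω := funext hY
    rw [this]; exact (hX.const_mul t).add hN
  have hm : MeasurableSpace.comap Y inferInstance ≤ ‹MeasurableSpace Ω› :=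
    hYmeas.comap_le
  -- the hard-decision estimator
  set Z : Ω → ℝ := fun ω => if 0 < Y ω then 1 else -1 with hZdef
  have hZsm : StronglyMeasurable[MeasurableSpace.comap Y inferInstance] Z := by
    refine Measurable.stronglyMeasurable ?_
    refine Measurable.ite ⟨Set.Ioi 0, measurableSet_Ioi, rfl⟩ measurable_const measurable_const
  have hZbd : ∀ ω, |Z ω| ≤ 1 := by
    intro ω; simp only [hZdef]; split <;> norm_num
  -- X is supported on {-1, 1} a.e.
  have hXae : ∀ᵐ ω ∂μ, X ω = -1 ∨ X ω = 1 := by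
    rw [ae_iff]
    have hset : {ω | ¬(X ω = -1 ∨ X ω = 1)} = X ⁻¹' ({-1, 1}ᶜ : Set ℝ) := by
      ext ω; simp [not_or]
    rw [hset, ← Measure.map_apply hX (((measurableSet_singleton (1:ℝ)).insert (-1)).compl),
      hXlaw]
    simp
  have hXbd : ∀ᵐ ω ∂μ, |X ω| ≤ 1 := by
    filter_upwards [hXae] with ω h
    rcases h with h | h <;> rw [h] <;> norm_num
  -- step 1: mmse is at most the error of Z
  have step1 := mmse_le_aux hm μ X Z hX hXbd hZsm hZbd
  refine step1.trans (le_of_eq ?_)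
  -- step 2: compute the error of Z
  set A1 : Set Ω := X ⁻¹' {(1 : ℝ)} ∩ N ⁻¹' Set.Iic (-t) with hA1
  set A2 : Set Ω := X ⁻¹' {(-1 : ℝ)} ∩ N ⁻¹' Set.Ioi t with hA2
  have hA1m : MeasurableSet A1 :=
    (hX (measurableSet_singleton _)).inter (hN measurableSet_Iic)
  have hA2m : MeasurableSet A2 :=
    (hX (measurableSet_singleton _)).inter (hN measurableSet_Ioi)
  have ht0 : 0 ≤ t := Real.sqrt_nonneg _
  have hae : ∀ᵐ ω ∂μ, (X ω - Z ω) ^ 2 = (A1 ∪ A2).indicator (fun _ => (4 : ℝ)) ω := by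
    filter_upwards [hXae] with ω h
    rcases h with h | h
    · -- X ω = -1
      have hYω : Y ω = N ω - t := by rw [hY ω, h]; ring
      by_cases hn : t < N ω
      · have hz : Z ω = 1 := by simp only [hZdef]; rw [if_pos (by rw [hYω]; linarith)]
        have hmem : ω ∈ A1 ∪ A2 := Or.inr ⟨by simp [h], hn⟩
        rw [Set.indicator_of_mem hmem, hz, h]; norm_num
      · have hz : Z ω = -1 := by simp only [hZdef]; rw [if_neg (by rw [hYω]; intro hc; exact hn (by linarith))]
        have hmem : ω ∉ A1 ∪ A2 := by
          rintro (⟨h1, _⟩ | ⟨_, h2⟩)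
          · rw [Set.mem_preimage, Set.mem_singleton_iff] at h1; rw [h] at h1; norm_num at h1
          · exact hn h2
        rw [Set.indicator_of_notMem hmem, hz, h]; norm_num
    · -- X ω = 1
      have hYω : Y ω = N ω + t := by rw [hY ω, h]; ring
      by_cases hn : N ω ≤ -t
      · have hz : Z ω = -1 := by simp only [hZdef]; rw [if_neg (by rw [hYω]; intro hc; linarith)]
        have hmem : ω ∈ A1 ∪ A2 := Or.inl ⟨by simp [h], hn⟩
        rw [Set.indicator_of_mem hmem, hz, h]; norm_num
      · have hz : Z ω = 1 := by simp only [hZdef]; rw [if_pos (by rw [hYω]; push_neg at hn; linarith)]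
        have hmem : ω ∉ A1 ∪ A2 := by
          rintro (⟨_, h1⟩ | ⟨h2, _⟩)
          · exact hn h1
          · rw [Set.mem_preimage, Set.mem_singleton_iff] at h2; rw [h] at h2; norm_num at h2
        rw [Set.indicator_of_notMem hmem, hz, h]; norm_num
  rw [integral_congr_ae hae, integral_indicator_const (4 : ℝ) (hA1m.union hA2m)]
  -- measure of the error event
  have hdisj : Disjoint A1 A2 := by
    rw [Set.disjoint_left]
    rintro ω ⟨h1, _⟩ ⟨h2, _⟩
    rw [Set.mem_preimage, Set.mem_singleton_iff] at h1 h2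
    rw [h1] at h2; norm_num at h2
  have hmu1 : μ A1 = (1 / 2 : ENNReal) * gaussianReal 0 1 (Set.Iic (-t)) := by
    rw [hA1, hindep.measure_inter_preimage_eq_mul _ _ (measurableSet_singleton _) measurableSet_Iic,
      ← Measure.map_apply hX (measurableSet_singleton _),
      ← Measure.map_apply hN measurableSet_Iic, hXlaw, hNlaw]
    simp only [Measure.add_apply, Measure.smul_apply, Measure.dirac_apply, smul_eq_mul]
    rw [Set.indicator_of_notMem (show (-1:ℝ) ∉ ({1}:Set ℝ) by norm_num),
      Set.indicator_of_mem (show (1:ℝ) ∈ ({1}:Set ℝ) by norm_num)]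
    simp [mul_comm]
  have hmu2 : μ A2 = (1 / 2 : ENNReal) * gaussianReal 0 1 (Set.Ioi t) := by
    rw [hA2, hindep.measure_inter_preimage_eq_mul _ _ (measurableSet_singleton _) measurableSet_Ioi,
      ← Measure.map_apply hX (measurableSet_singleton _),
      ← Measure.map_apply hN measurableSet_Ioi, hXlaw, hNlaw]
    simp only [Measure.add_apply, Measure.smul_apply, Measure.dirac_apply, smul_eq_mul]
    rw [Set.indicator_of_notMem (show (1:ℝ) ∉ ({-1}:Set ℝ) by norm_num),
      Set.indicator_of_mem (show (-1:ℝ) ∈ ({-1}:Set ℝ) by norm_num)]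
    simp [mul_comm]
  rw [measureReal_def, measure_union hdisj hA2m, hmu1, hmu2, ENNReal.toReal_add (ENNReal.mul_ne_top (by norm_num) (measure_ne_top _ _)) (ENNReal.mul_ne_top (by norm_num) (measure_ne_top _ _)),
    ENNReal.toReal_mul, ENNReal.toReal_mul, gauss_Iic, gauss_Ioi]
  simp only [smul_eq_mul]
  norm_num
  ring
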